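/- Let u = (u(x)|u'(x)) and v = (v(x)|v'(x)) be elements of Z_2[x]/(x^α-1) × Z_4[x]/(x^β-1) such that u(x)∘v(x) = 0 in Z_4[x]/(x^m-1) where m = lcm(α,β). If u'(x) = 0 or v'(x) = 0, then u(x)v*(x) ≡ 0 (mod x^α - 1) over Z_2. -/
import Mathlib


open Polynomial

/-- Coefficientwise lift of a binary polynomial to `Z₄[x]`, with
coefficients in `{0,1} ⊆ Z₄`. -/
noncomputable def lift24 (p : Polynomial (ZMod 2)) : Polynomial (ZMod 4) :=
  ∑ i ∈ p.support, C (((p.coeff i).val : ℕ) : ZMod 4) * X ^ i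

/-- `θ_k(x^n) = ∑_{i=0}^{k-1} x^{ni}` in `Z₄[x]`. -/
noncomputable def thetaPow (k n : ℕ) : Polynomial (ZMod 4) :=
  ∑ i ∈ Finset.range k, X ^ (n * i)

/-- The bilinear map `∘`, as a polynomial in `Z₄[x]` (to be reduced modulo
`x^m - 1`, `m = lcm(α,β)`). -/
noncomputable def circ (α β : ℕ) (u v : Polynomial (ZMod 2))
    (u' v' : Polynomial (ZMod 4)) : Polynomial (ZMod 4) :=
  2 * lift24 u * thetaPow (Nat.lcm α β / α) α *
      X ^ (Nat.lcm α β - 1 - v.natDegree) * lift24 v.reverse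
    + u' * thetaPow (Nat.lcm α β / β) β *
      X ^ (Nat.lcm α β - 1 - v'.natDegree) * v'.reverse

/-- Reduction mod 2, `Z₄ → Z₂`. -/
noncomputable abbrev phi42 : ZMod 4 →+* ZMod 2 :=
  ZMod.castHom (show 2 ∣ 4 by norm_num) (ZMod 2)

lemma phi42_val (a : ZMod 4) : phi42 a = ((a.val : ℕ) : ZMod 2) := by
  rw [ZMod.castHom_apply, ZMod.cast_eq_val]

lemma phi42_zero_iff (a : ZMod 4) : phi42 a = 0 ↔ a = 0 ∨ a = 2 := by
  rw [phi42_val]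
  have hval : a = ((a.val : ℕ) : ZMod 4) := by simp [ZMod.natCast_val, ZMod.cast_id]
  have h4 := ZMod.val_lt a
  rw [hval]
  interval_cases a.val <;> decide

lemma map_lift24 (p : Polynomial (ZMod 2)) : (lift24 p).map phi42 = p := by
  rw [lift24, Polynomial.map_sum]
  conv_rhs => rw [p.as_sum_support]
  refine Finset.sum_congr rfl fun n _ => ?_
  simp [ZMod.natCast_val, ZMod.cast_id, C_mul_X_pow_eq_monomial]

lemma map_thetaPow (k n : ℕ) :
    (thetaPow k n).map phi42 = ∑ i ∈ Finset.range k, (X : Polynomial (ZMod 2)) ^ (n * i) := by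
  simp [thetaPow, Polynomial.map_sum]

lemma exists_two_mul (q : Polynomial (ZMod 4)) (h : q.map phi42 = 0) :
    ∃ r, q = 2 * r := by
  refine ⟨∑ n ∈ q.support, C (if q.coeff n = 2 then 1 else 0) * X ^ n, ?_⟩
  conv_lhs => rw [q.as_sum_support]
  rw [Finset.mul_sum]
  refine Finset.sum_congr rfl fun n _ => ?_
  have hc : phi42 (q.coeff n) = 0 := by
    rw [← Polynomial.coeff_map, h, coeff_zero]
  have h02 := (phi42_zero_iff _).mp hc
  rcases h02 with h' | h'
  · rw [h']
    simp only [monomial_zero_right, if_neg (show (0 : ZMod 4) ≠ 2 by decide), C_0, zero_mul,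
      mul_zero]
  · rw [h', if_pos rfl, C_1, one_mul, ← C_mul_X_pow_eq_monomial, map_ofNat C 2]

lemma map_eq_zero_of_two_mul (q : Polynomial (ZMod 4)) (h : 2 * q = 0) :
    q.map phi42 = 0 := by
  ext n
  have hc : (2 : ZMod 4) * q.coeff n = 0 := by
    have := congrArg (fun p => Polynomial.coeff p n) h
    simpa using this
  have h02 : q.coeff n = 0 ∨ q.coeff n = 2 := by
    revert hc; generalize q.coeff n = a; revert a; decide
  have : phi42 (q.coeff n) = 0 := (phi42_zero_iff _).mpr h02
  simpa [Polynomial.coeff_map] using this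

/-- If `u(x)∘v(x) = 0` in `Z₄[x]/(x^m-1)` and `u'(x) = 0` or `v'(x) = 0`,
then `u(x)v*(x) ≡ 0 (mod x^α - 1)` over `Z₂`. -/
theorem binary_part_orthogonality (α β : ℕ) (hα : 0 < α) (hβ : 0 < β)
    (u v : Polynomial (ZMod 2)) (u' v' : Polynomial (ZMod 4))
    (hu : u.degree < (α : ℕ)) (hv : v.degree < (α : ℕ))
    (hu' : u'.degree < (β : ℕ)) (hv' : v'.degree < (β : ℕ))
    (hcirc : (X ^ Nat.lcm α β - 1 : Polynomial (ZMod 4)) ∣ circ α β u v u' v')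
    (hzero : u' = 0 ∨ v' = 0) :
    (X ^ α - 1 : Polynomial (ZMod 2)) ∣ u * v.reverse := by
  set m := Nat.lcm α β with hm
  have hαm : α ∣ m := Nat.dvd_lcm_left α β
  have hmpos : 0 < m := Nat.pos_of_ne_zero (Nat.lcm_ne_zero hα.ne' hβ.ne')
  set e := m - 1 - v.natDegree with he
  set k := m / α with hk
  -- the circ product is 2 * B
  set B : Polynomial (ZMod 4) :=
    lift24 u * thetaPow k α * X ^ e * lift24 v.reverse with hB
  have hcirc2 : circ α β u v u' v' = 2 * B := by
    rcases hzero with h | h <;>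
      simp [circ, hB, h, Polynomial.reverse_zero] <;> ring
  rw [hcirc2] at hcirc
  obtain ⟨q, hq⟩ := hcirc
  -- reduce mod 2
  have hXm2 : ((X : Polynomial (ZMod 2)) ^ m - 1) ≠ 0 := by
    intro h
    have := congrArg (fun p => Polynomial.coeff p m) h
    simp [Polynomial.coeff_X_pow, Polynomial.coeff_one, hmpos.ne'] at this
  have hmapq : q.map phi42 = 0 := by
    have h1 := congrArg (Polynomial.map phi42) hq
    have h2 : (2 : Polynomial (ZMod 4)).map phi42 = 0 := by
      rw [(map_ofNat C 2).symm, Polynomial.map_C, (phi42_zero_iff 2).mpr (Or.inr rfl), map_zero]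
    rw [Polynomial.map_mul, h2, zero_mul, Polynomial.map_mul] at h1
    have h3 : ((X : Polynomial (ZMod 4)) ^ m - 1).map phi42 = X ^ m - 1 := by
      simp [Polynomial.map_sub, Polynomial.map_pow]
    rw [h3] at h1
    rcases mul_eq_zero.mp h1.symm with h | h
    · exact absurd h hXm2
    · exact h
  obtain ⟨q₀, hq₀⟩ := exists_two_mul q hmapq
  have hkey : 2 * (B - (X ^ m - 1) * q₀) = 0 := by
    have h' : 2 * B = (X ^ m - 1) * (2 * q₀) := by rw [← hq₀]; exact hq
    linear_combination h'
  have hmapB : B.map phi42 = (X ^ m - 1) * q₀.map phi42 := by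
    have h' := map_eq_zero_of_two_mul _ hkey
    rw [Polynomial.map_sub, sub_eq_zero] at h'
    rw [h', Polynomial.map_mul]
    congr 1
    rw [Polynomial.map_sub, Polynomial.map_pow, Polynomial.map_X, Polynomial.map_one]
  -- compute B mod 2
  set θ₂ : Polynomial (ZMod 2) := ∑ i ∈ Finset.range k, X ^ (α * i) with hθ₂
  have hmapB' : B.map phi42 = u * θ₂ * X ^ e * v.reverse := by
    simp only [hB, Polynomial.map_mul, Polynomial.map_pow, Polynomial.map_X,
      map_lift24, map_thetaPow, hθ₂]
  have hdvd2 : ((X : Polynomial (ZMod 2)) ^ m - 1) ∣ u * θ₂ * X ^ e * v.reverse :=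
    ⟨q₀.map phi42, by rw [← hmapB', hmapB]⟩
  -- factor X^m - 1 = (X^α - 1) * θ₂
  have hfac : θ₂ * ((X : Polynomial (ZMod 2)) ^ α - 1) = X ^ m - 1 := by
    rw [hθ₂]
    simp_rw [pow_mul]
    rw [geom_sum_mul, ← pow_mul, Nat.mul_div_cancel' hαm]
  have hθ₂ne : θ₂ ≠ 0 := by
    intro h
    rw [h, zero_mul] at hfac
    exact hXm2 hfac.symm
  have hdvd3 : ((X : Polynomial (ZMod 2)) ^ α - 1) ∣ u * v.reverse * X ^ e := by
    have h1 : (((X : Polynomial (ZMod 2)) ^ α - 1) * θ₂) ∣ (u * v.reverse * X ^ e) * θ₂ := by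
      rw [mul_comm _ θ₂, hfac]
      have heq : u * θ₂ * X ^ e * v.reverse = u * v.reverse * X ^ e * θ₂ := by ring
      rw [← heq]; exact hdvd2
    exact (mul_dvd_mul_iff_right hθ₂ne).mp h1
  -- X^e coprime to X^α - 1
  have hcop : IsCoprime ((X : Polynomial (ZMod 2)) ^ α - 1) ((X : Polynomial (ZMod 2)) ^ e) := by
    have hX : IsCoprime ((X : Polynomial (ZMod 2)) ^ α - 1) X := by
      refine ⟨-1, X ^ (α - 1), ?_⟩
      have hXα : (X : Polynomial (ZMod 2)) ^ (α - 1) * X = X ^ α := by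
        rw [← pow_succ, Nat.sub_add_cancel hα]
      rw [hXα]; ring
    exact hX.pow_right
  exact hcop.dvd_of_dvd_mul_right hdvd3
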